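/- Slice theorem for limit sketches: Let L be a category equipped with a family of marked cones, each marked cone consisting of a small category J, an object x of L, and a functor S : J ⥤ Under x, and let M : L ⥤ Type be a model of this sketch. Equip the category of elements El(M) with the induced sketch whose marked cones are all functors T : J ⥤ Under e (for e an object of El(M)) such that composing T with the functor Under e ⥤ Under (π_M(e)) induced by the projection π_M : El(M) ⥤ L equals a marked cone S of L with vertex π_M(e). Then the category whose objects are pairs (N, α) with N : L ⥤ Type a model of the sketch on L and α : N ⟶ M a natural transformation, and whose morphisms (N, α) ⟶ (N', α') are natural transformations β : N ⟶ N' with α' ∘ β = α, is equivalent to the category of models of the induced sketch on El(M). -/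

import Mathlib

open CategoryTheory

universe w v u

/-- The canonical map from `M.obj a` to the sections of `S ⋙ Under.forget a ⋙ M`,
for a cone `S : J ⥤ Under a` with vertex `a`, sending `m` to the family
`j ↦ M.map (S.obj j).hom m`. -/
def canonicalSectionsMap {A : Type*} [Category A] {J : Type*} [Category J]
    (M : A ⥤ Type*) {a : A} (S : J ⥤ Under a) (m : M.obj a) :
    (S ⋙ Under.forget a ⋙ M).sections :=
  ⟨fun j => M.map (S.obj j).hom m, by
    intro j j' f
    have h := congrArg (fun g => M.map g m) (Under.w (S.map f))
    dsimp only at h ⊢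
    rw [Functor.map_comp] at h
    exact h⟩

/-- A limit sketch structure on a category `L`: a family of marked cones, each
given by a small category `J`, a vertex `x : L`, and a functor `J ⥤ Under x`. -/
structure Sketch (L : Type u) [Category.{v} L] where
  /-- the index of the family of marked cones -/
  ι : Type w
  /-- the (small) domain category of each marked cone -/
  J : ι → Cat.{v, v}
  /-- the vertex of each marked cone -/
  vertex : ι → L
  /-- the marked cones -/
  cone : ∀ i, J i ⥤ Under (vertex i)

/-- A functor `M : L ⥤ Type` is a model of a sketch on `L` if, for every marked cone,
the canonical map from the value of `M` at the vertex to the sections of the composite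
of the cone with `M` is a bijection. -/
def Sketch.IsModel {L : Type u} [Category.{v} L] (sk : Sketch.{w} L)
    (M : L ⥤ Type v) : Prop :=
  ∀ i : sk.ι, Function.Bijective (canonicalSectionsMap M (sk.cone i))

/-- The sketch induced on the category of elements of `M : L ⥤ Type` by a sketch on `L`:
its marked cones are all functors `T : J ⥤ Under e` whose composite with the functor
`Under e ⥤ Under (π_M(e))` induced by the projection `π_M` equals a marked cone of `L`
with vertex `π_M(e)`. -/
def Sketch.elements {L : Type u} [Category.{v} L] (sk : Sketch.{w} L)
    (M : L ⥤ Type v) : Sketch.{max w u v} M.Elements where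
  ι := { t : Σ (i : sk.ι) (e : M.Elements), ((sk.J i : Type v) ⥤ Under e) //
      ∃ h : (CategoryOfElements.π M).obj t.2.1 = sk.vertex t.1,
        t.2.2 ⋙ Under.post (CategoryOfElements.π M) =
          sk.cone t.1 ⋙ Under.map (eqToHom h) }
  J t := sk.J t.1.1
  vertex t := t.1.2.1
  cone t := t.1.2.2


namespace SliceProof

variable {L : Type u} [Category.{v} L] (M : L ⥤ Type v)

/-- workhorse for sigma equalities -/
lemma sigma_eq (F : M.Elements ⥤ Type v) {a : L} {e : M.Elements}
    {m m' : M.obj a} (f : e ⟶ M.elementsMk a m) (g : e ⟶ M.elementsMk a m')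
    (hfg : f.1 = g.1) (u : F.obj e) :
    (⟨m, F.map f u⟩ : Σ m : M.obj a, F.obj (M.elementsMk a m)) = ⟨m', F.map g u⟩ := by
  have hf := f.2
  have hg := g.2
  have hm : m = m' := by
    rw [show m = M.map f.1 e.2 from hf.symm, hfg]
    exact hg
  subst hm
  obtain rfl : f = g := Subtype.ext hfg
  rfl

lemma sigma_snd (F : M.Elements ⥤ Type v) {a : L}
    {p q : Σ m : M.obj a, F.obj (M.elementsMk a m)}
    (h : p = q) (f : M.elementsMk a p.1 ⟶ M.elementsMk a q.1) (hf : f.1 = 𝟙 a) :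
    F.map f p.2 = q.2 := by
  subst h
  obtain rfl : f = 𝟙 (M.elementsMk a p.1) := Subtype.ext hf
  rw [F.map_id]
  rfl

/-- the "fiber" functor on elements associated to an object of `Over M` -/
@[simps]
def fiber (X : Over M) : M.Elements ⥤ Type v where
  obj e := { n : X.left.obj e.1 // X.hom.app e.1 n = e.2 }
  map {e e'} f := ↾ fun n => ⟨X.left.map f.1 n.1, by
    have h1 := ConcreteCategory.congr_hom (X.hom.naturality f.1) n.1
    dsimp at h1
    rw [h1, n.2, f.2]⟩
  map_id e := by refine ConcreteCategory.hom_ext _ _ fun n => ?_; apply Subtype.ext; simp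
  map_comp f g := by refine ConcreteCategory.hom_ext _ _ fun n => ?_; apply Subtype.ext; simp

/-- `Over M ⥤ (M.Elements ⥤ Type v)` -/
@[simps]
def toElements : Over M ⥤ (M.Elements ⥤ Type v) where
  obj X := fiber M X
  map {X Y} g :=
    { app := fun e => ↾ fun n => ⟨g.left.app e.1 n.1, by
        have h1 := ConcreteCategory.congr_hom (NatTrans.congr_app (Over.w g) e.1) n.1
        dsimp at h1
        rw [h1, n.2]⟩
      naturality := by
        intro e e' f
        refine ConcreteCategory.hom_ext _ _ fun n => ?_
        apply Subtype.ext
        exact ConcreteCategory.congr_hom (g.left.naturality f.1) n.1 }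
  map_id X := by ext e n; rfl
  map_comp f g := by ext e n; rfl

/-- the total ("sigma") functor associated to a functor on elements -/
@[simps]
def total (F : M.Elements ⥤ Type v) : L ⥤ Type v where
  obj a := Σ m : M.obj a, F.obj (M.elementsMk a m)
  map {a b} f := ↾ fun p => ⟨M.map f p.1,
    F.map (⟨f, rfl⟩ : M.elementsMk a p.1 ⟶ M.elementsMk b (M.map f p.1)) p.2⟩
  map_id a := by
    refine ConcreteCategory.hom_ext _ _ fun p => ?_
    exact (sigma_eq M F (⟨𝟙 a, rfl⟩ : M.elementsMk a p.1 ⟶ M.elementsMk a (M.map (𝟙 a) p.1))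
      (𝟙 (M.elementsMk a p.1)) rfl p.2).trans (by rw [F.map_id]; rfl)
  map_comp {a b c} f g := by
    refine ConcreteCategory.hom_ext _ _ fun p => ?_
    refine Eq.trans ?_ (congrArg (Sigma.mk _)
      (ConcreteCategory.congr_hom (F.map_comp (⟨f, rfl⟩ : M.elementsMk a p.1 ⟶ M.elementsMk b (M.map f p.1))
        (⟨g, rfl⟩ : M.elementsMk b (M.map f p.1) ⟶ M.elementsMk c (M.map g (M.map f p.1)))) p.2))
    exact sigma_eq M F (⟨f ≫ g, rfl⟩ : M.elementsMk a p.1 ⟶ M.elementsMk c (M.map (f ≫ g) p.1))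
      ((⟨f, rfl⟩ : M.elementsMk a p.1 ⟶ M.elementsMk b (M.map f p.1)) ≫
        (⟨g, rfl⟩ : M.elementsMk b (M.map f p.1) ⟶ M.elementsMk c (M.map g (M.map f p.1)))) rfl p.2

/-- the projection from the total functor to `M` -/
@[simps]
def totalProj (F : M.Elements ⥤ Type v) : total M F ⟶ M where
  app a := ↾ fun p => p.1
  naturality a b f := by ext p; rfl

/-- `(M.Elements ⥤ Type v) ⥤ Over M` -/
@[simps]
def ofElements : (M.Elements ⥤ Type v) ⥤ Over M where
  obj F := Over.mk (totalProj M F)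
  map {F G} τ := Over.homMk
    { app := fun a => ↾ fun p => ⟨p.1, τ.app (M.elementsMk a p.1) p.2⟩
      naturality := by
        intro a b f
        refine ConcreteCategory.hom_ext _ _ fun p => ?_
        exact congrArg (Sigma.mk _) (ConcreteCategory.congr_hom (τ.naturality
          (⟨f, rfl⟩ : M.elementsMk a p.1 ⟶ M.elementsMk b (M.map f p.1))) p.2) }
    (by ext a p; rfl)
  map_id F := by ext a p; rfl
  map_comp f g := by ext a p; rfl


lemma fiber_total_ext (X : Over M) {a : L}
    (p q : (total M (fiber M X)).obj a) (h : p.2.1 = q.2.1) : p = q := by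
  obtain ⟨m, n, hn⟩ := p
  obtain ⟨m', n', hn'⟩ := q
  have h' : n = n' := h
  subst h'
  have hm : m = m' := hn.symm.trans hn'
  subst hm
  rfl

/-- the component of the unit iso -/
def unitIsoAppLeft (X : Over M) : X.left ≅ total M (fiber M X) :=
  NatIso.ofComponents
    (fun a =>
      { hom := ↾ fun n => ⟨X.hom.app a n, n, rfl⟩
        inv := ↾ fun p => p.2.1
        hom_inv_id := by ext n; rfl
        inv_hom_id := by
          refine ConcreteCategory.hom_ext _ _ fun p => ?_
          exact fiber_total_ext M X _ _ rfl })
    (by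
      intro a b f
      refine ConcreteCategory.hom_ext _ _ fun n => ?_
      exact fiber_total_ext M X _ _ rfl)

/-- the unit iso -/
def unitIso : 𝟭 (Over M) ≅ toElements M ⋙ ofElements M :=
  NatIso.ofComponents
    (fun X => Over.isoMk (unitIsoAppLeft M X) (by ext a n; rfl))
    (by
      intro X Y g
      ext a n
      exact fiber_total_ext M Y _ _ rfl)

/-- the component of the counit iso -/
def counitIsoApp (F : M.Elements ⥤ Type v) :
    ∀ e : M.Elements, ((ofElements M ⋙ toElements M).obj F).obj e ≅ F.obj e
  | ⟨a, m⟩ =>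
    { hom := ↾ fun p => F.map
        (⟨𝟙 a, by rw [FunctorToTypes.map_id_apply]; exact p.2⟩ :
          M.elementsMk a p.1.1 ⟶ M.elementsMk a m) p.1.2
      inv := ↾ fun u => ⟨⟨m, u⟩, rfl⟩
      hom_inv_id := by
        refine ConcreteCategory.hom_ext _ _ fun p => ?_
        apply Subtype.ext
        refine Eq.trans (sigma_eq M F
          (⟨𝟙 a, by rw [FunctorToTypes.map_id_apply]; exact p.2⟩ :
            M.elementsMk a p.1.1 ⟶ M.elementsMk a m)
          (𝟙 (M.elementsMk a p.1.1)) rfl p.1.2) ?_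
        rw [F.map_id]
        rfl
      inv_hom_id := by
        ext u
        dsimp
        have h2 : (⟨𝟙 a, by rw [FunctorToTypes.map_id_apply]⟩ :
            M.elementsMk a m ⟶ M.elementsMk a m) = 𝟙 (M.elementsMk a m) := Subtype.ext rfl
        rw [h2]
        exact F.map_id_apply _ _ }

/-- the counit iso -/
def counitIso : ofElements M ⋙ toElements M ≅ 𝟭 (M.Elements ⥤ Type v) :=
  NatIso.ofComponents
    (fun F => NatIso.ofComponents (counitIsoApp M F)
      (by
        intro e e' f
        obtain ⟨a, m⟩ := e
        obtain ⟨a', m'⟩ := e'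
        refine ConcreteCategory.hom_ext _ _ fun p => ?_
        dsimp [counitIsoApp]
        erw [← Functor.map_comp_apply, ← Functor.map_comp_apply]
        exact ConcreteCategory.congr_hom (congrArg F.map (Subtype.ext (by exact (Category.comp_id _).trans (Category.id_comp _).symm))) _))
    (by
      intro F G τ
      ext e p
      obtain ⟨a, m⟩ := e
      dsimp [counitIsoApp]
      exact (ConcreteCategory.congr_hom (τ.naturality _) _).symm)

/-- the equivalence `Over M ≌ (M.Elements ⥤ Type v)` -/
def equiv : Over M ≌ (M.Elements ⥤ Type v) :=
  CategoryTheory.Equivalence.mk (toElements M) (ofElements M) (unitIso M) (counitIso M)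

lemma under_hom_of_eq {x : L} {U V : Under x} (hUV : U = V) :
    U.hom ≫ eqToHom (congrArg Comma.right hUV) = V.hom := by
  subst hUV; simp

theorem isModel_fiber (sk : Sketch.{w} L) (hM : sk.IsModel M) (X : Over M)
    (hX : sk.IsModel X.left) : (sk.elements M).IsModel (fiber M X) := by
  rintro ⟨⟨i, e, T⟩, h, hT⟩
  obtain ⟨a, m, rfl⟩ : ∃ a m, e = M.elementsMk a m := ⟨e.1, e.2, rfl⟩
  have h' : a = sk.vertex i := h
  subst h'
  have hT' : T ⋙ Under.post (CategoryOfElements.π M) =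
      sk.cone i ⋙ Under.map (𝟙 (sk.vertex i)) := hT
  -- object-level comparison
  have hr : ∀ j : sk.J i, ((T.obj j).right).1 = (((sk.cone i).obj j)).right := by
    intro j
    exact congrArg Comma.right (Functor.congr_obj hT' j)
  have hhom : ∀ j : sk.J i, ((T.obj j).hom).val ≫ eqToHom (hr j) = ((sk.cone i).obj j).hom := by
    intro j
    have h1 := under_hom_of_eq (Functor.congr_obj hT' j)
    exact h1.trans (by simp; rfl)
  have hmor : ∀ {j j' : sk.J i} (φ : j ⟶ j'),
      ((T.map φ).right).val =
        eqToHom (hr j) ≫ ((sk.cone i).map φ).right ≫ eqToHom (hr j').symm := by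
    intro j j' φ
    have h1 := congrArg Under.Hom.right (Functor.congr_hom hT' φ)
    erw [Under.comp_right, Under.comp_right, Under.eqToHom_right, Under.eqToHom_right,
      Under.map_map_right] at h1
    exact h1
  show Function.Bijective (canonicalSectionsMap (fiber M X) T)
  constructor
  · -- injectivity
    intro n n' hnn
    apply Subtype.ext
    apply (hX i).1
    apply Subtype.ext
    funext j
    show X.left.map ((sk.cone i).obj j).hom n.1 = X.left.map ((sk.cone i).obj j).hom n'.1
    rw [← hhom j, FunctorToTypes.map_comp_apply, FunctorToTypes.map_comp_apply]
    have h2 : X.left.map ((T.obj j).hom).val n.1 = X.left.map ((T.obj j).hom).val n'.1 :=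
      congrArg Subtype.val (congrFun (congrArg Subtype.val hnn) j)
    rw [h2]
  · -- surjectivity
    intro s
    -- the underlying family, transported to a section of `S ⋙ forget ⋙ X.left`
    have ysec : (fun j => X.left.map (eqToHom (hr j)) (s.1 j).1) ∈
        ((sk.cone i) ⋙ Under.forget (sk.vertex i) ⋙ X.left).sections := by
      intro j j' φ
      show X.left.map ((sk.cone i).map φ).right (X.left.map (eqToHom (hr j)) (s.1 j).1) =
        X.left.map (eqToHom (hr j')) (s.1 j').1
      have h2 : X.left.map ((T.map φ).right).val (s.1 j).1 = (s.1 j').1 :=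
        congrArg Subtype.val (s.2 φ)
      rw [← h2, hmor φ]
      erw [← Functor.map_comp_apply, ← Functor.map_comp_apply]
      refine ConcreteCategory.congr_hom (congrArg X.left.map ?_) (s.1 j).1
      simp
    obtain ⟨n₀, hn₀⟩ := (hX i).2 ⟨_, ysec⟩
    have hn₀' : ∀ j, X.left.map ((sk.cone i).obj j).hom n₀ = X.left.map (eqToHom (hr j)) (s.1 j).1 :=
      fun j => congrFun (congrArg Subtype.val hn₀) j
    -- show that `n₀` lies over `m`
    have hα : X.hom.app (sk.vertex i) n₀ = m := by
      apply (hM i).1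
      apply Subtype.ext
      funext j
      have h3 := ConcreteCategory.congr_hom (X.hom.naturality ((sk.cone i).obj j).hom) n₀
      dsimp at h3
      have h4 := ConcreteCategory.congr_hom (X.hom.naturality (eqToHom (hr j))) (s.1 j).1
      dsimp at h4
      show M.map ((sk.cone i).obj j).hom (X.hom.app (sk.vertex i) n₀) =
        M.map ((sk.cone i).obj j).hom m
      calc M.map ((sk.cone i).obj j).hom (X.hom.app (sk.vertex i) n₀)
          = X.hom.app _ (X.left.map ((sk.cone i).obj j).hom n₀) := h3.symm
        _ = X.hom.app _ (X.left.map (eqToHom (hr j)) (s.1 j).1) := congrArg _ (hn₀' j)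
        _ = M.map (eqToHom (hr j)) (X.hom.app _ (s.1 j).1) := h4
        _ = M.map (eqToHom (hr j)) ((T.obj j).right.2) := congrArg _ (s.1 j).2
        _ = M.map (eqToHom (hr j)) (M.map ((T.obj j).hom).val m) :=
            congrArg _ ((T.obj j).hom.2).symm
        _ = M.map (((T.obj j).hom).val ≫ eqToHom (hr j)) m :=
            (FunctorToTypes.map_comp_apply M _ _ m).symm
        _ = M.map ((sk.cone i).obj j).hom m := by rw [hhom j]
    refine ⟨⟨n₀, hα⟩, ?_⟩
    apply Subtype.ext
    funext j
    apply Subtype.ext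
    show X.left.map ((T.obj j).hom).val n₀ = (s.1 j).1
    have h5 : X.left.map (eqToHom (hr j)) (X.left.map ((T.obj j).hom).val n₀) =
        X.left.map (eqToHom (hr j)) (s.1 j).1 := by
      rw [← FunctorToTypes.map_comp_apply, hhom j]
      exact hn₀' j
    have h6 := congrArg (X.left.map (eqToHom (hr j).symm)) h5
    rw [← FunctorToTypes.map_comp_apply, ← FunctorToTypes.map_comp_apply] at h6
    simpa using h6

/-- transport along an equality of elements over the identity -/
def idMor {a : L} {m m' : M.obj a} (h : m = m') :
    M.elementsMk a m ⟶ M.elementsMk a m' :=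
  ⟨𝟙 a, by rw [FunctorToTypes.map_id_apply]; exact h⟩

@[simp] lemma idMor_val {a : L} {m m' : M.obj a} (h : m = m') : (idMor M h).1 = 𝟙 a := rfl

lemma idMor_refl {a : L} (m : M.obj a) : idMor M (rfl : m = m) = 𝟙 (M.elementsMk a m) :=
  Subtype.ext rfl

/-- The canonical lift of a marked cone along an element of the vertex. -/
def lift (sk : Sketch.{w} L) (i : sk.ι) (m : M.obj (sk.vertex i)) :
    (sk.J i : Type v) ⥤ Under (M.elementsMk (sk.vertex i) m) where
  obj j := Under.mk
    (⟨((sk.cone i).obj j).hom, rfl⟩ :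
      M.elementsMk (sk.vertex i) m ⟶
        M.elementsMk ((sk.cone i).obj j).right (M.map ((sk.cone i).obj j).hom m))
  map {j j'} φ := Under.homMk
    (⟨((sk.cone i).map φ).right, by
      rw [← FunctorToTypes.map_comp_apply, Under.w]⟩ :
      M.elementsMk ((sk.cone i).obj j).right (M.map ((sk.cone i).obj j).hom m) ⟶
        M.elementsMk ((sk.cone i).obj j').right (M.map ((sk.cone i).obj j').hom m))
    (by
      apply CategoryOfElements.ext
      simpa using Under.w ((sk.cone i).map φ))
  map_id j := by
    apply StructuredArrow.hom_ext
    apply CategoryOfElements.ext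
    simp
  map_comp φ ψ := by
    apply StructuredArrow.hom_ext
    apply CategoryOfElements.ext
    simp

lemma under_ext {x : L} {U V : Under x} (hr : U.right = V.right)
    (hh : U.hom ≫ eqToHom hr = V.hom) : U = V := by
  obtain ⟨ul, ur, uh⟩ := U
  obtain ⟨vl, vr, vh⟩ := V
  change ur = vr at hr
  subst hr
  obtain rfl : ul = vl := Subsingleton.elim _ _
  simp only [eqToHom_refl, Category.comp_id] at hh
  change uh = vh at hh
  subst hh
  rfl

lemma lift_comp_post (sk : Sketch.{w} L) (i : sk.ι) (m : M.obj (sk.vertex i)) :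
    lift M sk i m ⋙ Under.post (CategoryOfElements.π M) =
      sk.cone i ⋙ Under.map (eqToHom (rfl :
        (CategoryOfElements.π M).obj (M.elementsMk (sk.vertex i) m) = sk.vertex i)) := by
  apply CategoryTheory.Functor.ext
  case h_obj =>
    intro j
    refine under_ext (rfl :
      ((lift M sk i m ⋙ Under.post (CategoryOfElements.π M)).obj j).right =
      ((sk.cone i ⋙ Under.map (eqToHom (rfl :
        (CategoryOfElements.π M).obj (M.elementsMk (sk.vertex i) m) = sk.vertex i))).obj j).right)
      ?_
    show ((sk.cone i).obj j).hom ≫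
        eqToHom (rfl : ((sk.cone i).obj j).right = ((sk.cone i).obj j).right) =
      eqToHom (rfl : sk.vertex i = sk.vertex i) ≫ ((sk.cone i).obj j).hom
    simp
  case h_map =>
    intro j j' φ
    apply Under.UnderMorphism.ext
    rw [Under.comp_right, Under.comp_right, Under.eqToHom_right, Under.eqToHom_right]
    exact (show ((sk.cone i).map φ).right =
      eqToHom (rfl : ((sk.cone i).obj j).right = ((sk.cone i).obj j).right) ≫
      ((sk.cone i).map φ).right ≫
      eqToHom (rfl : ((sk.cone i).obj j').right = ((sk.cone i).obj j').right) from by simp)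

theorem isModel_total (sk : Sketch.{w} L) (hM : sk.IsModel M)
    (F : M.Elements ⥤ Type v) (hF : (sk.elements M).IsModel F) :
    sk.IsModel (total M F) := by
  intro i
  constructor
  · -- injectivity
    rintro ⟨m, u⟩ ⟨m', u'⟩ hpq
    -- the first components agree
    have hm : m = m' := by
      apply (hM i).1
      apply Subtype.ext
      funext j
      exact congrArg Sigma.fst (congrFun (congrArg Subtype.val hpq) j)
    subst hm
    -- use the model condition on the induced cone at `m`
    have hFc := hF ⟨⟨i, M.elementsMk (sk.vertex i) m, lift M sk i m⟩,
      ⟨rfl, lift_comp_post M sk i m⟩⟩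
    have hu : u = u' := by
      apply hFc.1
      apply Subtype.ext
      funext j
      show F.map ((lift M sk i m).obj j).hom u = F.map ((lift M sk i m).obj j).hom u'
      have h2 := sigma_snd M F (congrFun (congrArg Subtype.val hpq) j)
        (idMor M (rfl : M.map ((sk.cone i).obj j).hom m = M.map ((sk.cone i).obj j).hom m)) rfl
      erw [idMor_refl, F.map_id] at h2
      exact h2
    rw [hu]
  · -- surjectivity
    intro s
    have qsec : (fun j => (s.1 j).1) ∈ ((sk.cone i) ⋙ Under.forget _ ⋙ M).sections := by
      intro j j' φ
      exact congrArg Sigma.fst (s.2 φ)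
    obtain ⟨m, hm⟩ := (hM i).2 ⟨_, qsec⟩
    have hmj : ∀ j, M.map ((sk.cone i).obj j).hom m = (s.1 j).1 :=
      fun j => congrFun (congrArg Subtype.val hm) j
    have s'sec : (fun j => F.map (idMor M (hmj j).symm) (s.1 j).2) ∈
        (lift M sk i m ⋙ Under.forget _ ⋙ F).sections := by
      intro j j' φ
      have h2 : F.map (idMor M (congrArg Sigma.fst (s.2 φ))) (F.map
          (⟨((sk.cone i).map φ).right, rfl⟩ :
            M.elementsMk ((sk.cone i).obj j).right (s.1 j).1 ⟶
            M.elementsMk ((sk.cone i).obj j').right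
              (M.map ((sk.cone i).map φ).right (s.1 j).1))
          (s.1 j).2) = (s.1 j').2 :=
        sigma_snd M F (s.2 φ) _ rfl
      show F.map ((lift M sk i m).map φ).right (F.map (idMor M (hmj j).symm) (s.1 j).2) =
        F.map (idMor M (hmj j').symm) (s.1 j').2
      rw [← h2]
      erw [← Functor.map_comp_apply, ← Functor.map_comp_apply, ← Functor.map_comp_apply]
      refine ConcreteCategory.congr_hom (congrArg F.map (Subtype.ext ?_)) (s.1 j).2
      simp [lift]
      show _ = _ ≫ 𝟙 _ ≫ 𝟙 _
      simp
    have hFc := hF ⟨⟨i, M.elementsMk (sk.vertex i) m, lift M sk i m⟩,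
      ⟨rfl, lift_comp_post M sk i m⟩⟩
    obtain ⟨u, hu⟩ := hFc.2 ⟨_, s'sec⟩
    refine ⟨⟨m, u⟩, ?_⟩
    apply Subtype.ext
    funext j
    have huj : F.map ((lift M sk i m).obj j).hom u = F.map (idMor M (hmj j).symm) (s.1 j).2 :=
      congrFun (congrArg Subtype.val hu) j
    show (⟨M.map ((sk.cone i).obj j).hom m, F.map ((lift M sk i m).obj j).hom u⟩ :
        (total M F).obj ((sk.cone i).obj j).right) = s.1 j
    rw [huj]
    refine Eq.trans (sigma_eq M F (idMor M (hmj j).symm)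
      (𝟙 (M.elementsMk ((sk.cone i).obj j).right (s.1 j).1)) rfl (s.1 j).2) ?_
    exact congrArg (Sigma.mk (s.1 j).1) (ConcreteCategory.congr_hom (F.map_id _) (s.1 j).2)

/-- Transport an equivalence to full subcategories. -/
def fullSubEquiv {C : Type*} {D : Type*} [Category C] [Category D] (e : C ≌ D)
    {P : ObjectProperty C} {Q : ObjectProperty D}
    (h1 : ∀ c, P c → Q (e.functor.obj c)) (h2 : ∀ d, Q d → P (e.inverse.obj d)) :
    P.FullSubcategory ≌ Q.FullSubcategory :=
  CategoryTheory.Equivalence.mk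
    (Q.lift (P.ι ⋙ e.functor) (fun c => h1 _ c.2))
    (P.lift (Q.ι ⋙ e.inverse) (fun d => h2 _ d.2))
    (NatIso.ofComponents
      (fun c => P.isoMk (e.unitIso.app c.obj))
      (fun f => by ext; exact e.unit.naturality f.hom))
    (NatIso.ofComponents
      (fun d => Q.isoMk (e.counitIso.app d.obj))
      (fun f => by ext; exact e.counit.naturality f.hom))

end SliceProof

/-- Slice theorem for limit sketches: for a model `M` of a sketch on `L`, the category
of models over `M` (pairs of a model `N` and a natural transformation `N ⟶ M`, with
morphisms the natural transformations commuting with the legs to `M`) is equivalent to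
the category of models of the induced sketch on the category of elements of `M`. -/
theorem sketch_slice_theorem {L : Type u} [Category.{v} L] (sk : Sketch.{w} L)
    (M : L ⥤ Type v) (hM : sk.IsModel M) :
    Nonempty
      (ObjectProperty.FullSubcategory (fun X : Over M => sk.IsModel X.left) ≌
        ObjectProperty.FullSubcategory (fun N : M.Elements ⥤ Type v => (sk.elements M).IsModel N)) := by
  exact ⟨SliceProof.fullSubEquiv (SliceProof.equiv M)
    (fun X hX => SliceProof.isModel_fiber M sk hM X hX)
    (fun F hF => SliceProof.isModel_total M sk hM F hF)⟩
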